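/- Let (U, W, B) be a linear system over ℂ. The linear map ι : U ⊗ W → End_ℂ(U), ι(u ⊗ w)(x) = B(x,w) • u, is injective; its range equals the set S := {φ ∈ End_ℂ(U) : φ has finite rank and φ*(W̃) ⊆ W̃}; and S is a Lie ideal of the Mackey Lie algebra gl^M_{U,W} (i.e. for φ ∈ gl^M_{U,W} and ψ ∈ S one has φψ − ψφ ∈ S). In particular, the Lie algebra gl_{U,W} = range ι is isomorphic to the ideal S of gl^M_{U,W}. -/

import Mathlib

open TensorProduct

attribute [local instance] LieRing.ofAssociativeRing

variable {U W : Type*} [AddCommGroup U] [Module ℂ U] [AddCommGroup W] [Module ℂ W]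

/-- The linear map `ι : U ⊗ W → End ℂ U` determined by `ι(u ⊗ w)(x) = B x w • u`. -/
noncomputable def iotaMap (B : U →ₗ[ℂ] W →ₗ[ℂ] ℂ) :
    U ⊗[ℂ] W →ₗ[ℂ] Module.End ℂ U :=
  (dualTensorHom ℂ U U).comp ((TensorProduct.map B.flip LinearMap.id).comp
    (TensorProduct.comm ℂ U W).toLinearMap)

/-- The defining property of `iotaMap`. -/
theorem iotaMap_apply (B : U →ₗ[ℂ] W →ₗ[ℂ] ℂ) (u x : U) (w : W) :
    iotaMap B (u ⊗ₜ w) x = B x w • u := by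
  simp [iotaMap]

/-- The linear map `T : U ⊗ W → ℂ` determined by `T(u ⊗ w) = B u w`. -/
noncomputable def Tmap (B : U →ₗ[ℂ] W →ₗ[ℂ] ℂ) : U ⊗[ℂ] W →ₗ[ℂ] ℂ :=
  TensorProduct.lift B

theorem Tmap_apply (B : U →ₗ[ℂ] W →ₗ[ℂ] ℂ) (u : U) (w : W) :
    Tmap B (u ⊗ₜ w) = B u w := rfl

/-- The Mackey Lie algebra `gl^M_{U,W}`: all `φ ∈ End ℂ U` whose dual map preserves
`W̃ = range (B.flip) ⊆ U*`. -/
noncomputable def glMackey (B : U →ₗ[ℂ] W →ₗ[ℂ] ℂ) :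
    LieSubalgebra ℂ (Module.End ℂ U) where
  carrier := {φ | ∀ ξ ∈ LinearMap.range B.flip, φ.dualMap ξ ∈ LinearMap.range B.flip}
  add_mem' := by
    intro a b ha hb ξ hξ
    have h : (a + b).dualMap ξ = a.dualMap ξ + b.dualMap ξ := by ext x; simp
    rw [h]
    exact Submodule.add_mem _ (ha ξ hξ) (hb ξ hξ)
  zero_mem' := by
    intro ξ hξ
    have h : (0 : Module.End ℂ U).dualMap ξ = 0 := by ext x; simp
    rw [h]; exact Submodule.zero_mem _
  smul_mem' := by
    intro c a ha ξ hξ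
    have h : (c • a).dualMap ξ = c • a.dualMap ξ := by ext x; simp
    rw [h]
    exact Submodule.smul_mem _ _ (ha ξ hξ)
  lie_mem' := by
    intro a b ha hb ξ hξ
    have h : (⁅a, b⁆ : Module.End ℂ U).dualMap ξ
        = b.dualMap (a.dualMap ξ) - a.dualMap (b.dualMap ξ) := by
      ext x; simp [Module.End.lie_apply]
    rw [h]
    exact Submodule.sub_mem _ (hb _ (ha ξ hξ)) (ha _ (hb ξ hξ))

/-- The set `S` of finite-rank endomorphisms of `U` whose dual map preserves
`W̃ = range B.flip`. -/
def Sset (B : U →ₗ[ℂ] W →ₗ[ℂ] ℂ) : Set (Module.End ℂ U) :=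
  {φ | FiniteDimensional ℂ (LinearMap.range φ) ∧
    ∀ ξ ∈ LinearMap.range B.flip, φ.dualMap ξ ∈ LinearMap.range B.flip}

-- auxiliary: Sset is closed under addition
theorem Sset_add (B : U →ₗ[ℂ] W →ₗ[ℂ] ℂ) {a b : Module.End ℂ U}
    (ha : a ∈ Sset B) (hb : b ∈ Sset B) : a + b ∈ Sset B := by
  obtain ⟨ha1, ha2⟩ := ha
  obtain ⟨hb1, hb2⟩ := hb
  constructor
  · have hle : LinearMap.range (a + b) ≤ LinearMap.range a ⊔ LinearMap.range b := by
      rintro _ ⟨x, rfl⟩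
      exact Submodule.add_mem _ (Submodule.mem_sup_left ⟨x, rfl⟩)
        (Submodule.mem_sup_right ⟨x, rfl⟩)
    exact Submodule.finiteDimensional_of_le hle
  · intro ξ hξ
    have h : (a + b).dualMap ξ = a.dualMap ξ + b.dualMap ξ := by ext x; simp
    rw [h]
    exact Submodule.add_mem _ (ha2 ξ hξ) (hb2 ξ hξ)

/-- For a linear system `(U, W, B)`: `ι` is injective, its range is exactly the set `S`
of finite-rank endomorphisms `φ` with `φ*(W̃) ⊆ W̃`, and `S` is a Lie ideal of the
Mackey Lie algebra `gl^M_{U,W}`.  In particular `gl_{U,W} = range ι ≅ S`. -/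
theorem stmt_7 (B : U →ₗ[ℂ] W →ₗ[ℂ] ℂ)
    (hB1 : ∀ u : U, (∀ w : W, B u w = 0) → u = 0)
    (hB2 : ∀ w : W, (∀ u : U, B u w = 0) → w = 0) :
    Function.Injective (iotaMap B) ∧
    (∀ φ : Module.End ℂ U, φ ∈ LinearMap.range (iotaMap B) ↔ φ ∈ Sset B) ∧
    (∀ φ ∈ glMackey B, ∀ ψ ∈ Sset B, φ * ψ - ψ * φ ∈ Sset B) := by
  classical
  -- setup for injectivity
  have hinj : Function.Injective (iotaMap B) := by
    let b := Module.Basis.ofVectorSpace ℂ U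
    let g : U ⊗[ℂ] W ≃ₗ[ℂ] (Module.Basis.ofVectorSpaceIndex ℂ U) →₀ W :=
      (TensorProduct.congr b.repr (LinearEquiv.refl ℂ W)).trans
        (TensorProduct.finsuppScalarLeft ℂ W _)
    have hkey : ∀ (t : U ⊗[ℂ] W) (i : Module.Basis.ofVectorSpaceIndex ℂ U) (x : U),
        B x (g t i) = b.coord i (iotaMap B t x) := by
      intro t
      induction t using TensorProduct.induction_on with
      | zero => intro i x; simp
      | tmul u w =>
        intro i x
        simp [g, iotaMap_apply, TensorProduct.finsuppScalarLeft_apply_tmul_apply,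
          Module.Basis.coord_apply, mul_comm]
      | add s t hs ht =>
        intro i x
        simp only [map_add, Finsupp.add_apply, LinearMap.add_apply, hs, ht]
    rw [← LinearMap.ker_eq_bot]
    apply LinearMap.ker_eq_bot'.mpr
    intro t ht
    have hg : g t = 0 := by
      ext i
      refine hB2 _ fun x => ?_
      rw [hkey t i x, ht]
      simp
    exact g.map_eq_zero_iff.mp hg
  refine ⟨hinj, fun φ => ⟨?_, ?_⟩, ?_⟩
  · -- range ι ⊆ S
    rintro ⟨t, rfl⟩
    induction t using TensorProduct.induction_on with
    | zero =>
      rw [map_zero]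
      constructor
      · rw [LinearMap.range_zero]
        infer_instance
      · intro ξ hξ
        have : (0 : Module.End ℂ U).dualMap ξ = 0 := by ext x; simp
        rw [this]; exact Submodule.zero_mem _
    | tmul u w =>
      constructor
      · have hle : LinearMap.range (iotaMap B (u ⊗ₜ w)) ≤ Submodule.span ℂ {u} := by
          rintro _ ⟨x, rfl⟩
          rw [iotaMap_apply]
          exact Submodule.smul_mem _ _ (Submodule.mem_span_singleton_self u)
        exact Submodule.finiteDimensional_of_le hle
      · intro ξ hξ
        have h : (iotaMap B (u ⊗ₜ w)).dualMap ξ = ξ u • B.flip w := by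
          ext x; simp [iotaMap_apply, mul_comm]
        rw [h]
        exact Submodule.smul_mem _ _ ⟨w, rfl⟩
    | add s t hs ht =>
      rw [map_add]
      exact Sset_add B hs ht
  · -- S ⊆ range ι
    rintro ⟨hfin, hdual⟩
    haveI := hfin
    set V := LinearMap.range φ with hV
    let v : Module.Basis (Fin (Module.finrank ℂ V)) ℂ V := Module.finBasis ℂ V
    -- restriction map r : W → Dual V is surjective
    let r : W →ₗ[ℂ] Module.Dual ℂ V :=
      { toFun := fun w => (B.flip w).comp V.subtype
        map_add' := by intro w₁ w₂; ext x; simp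
        map_smul' := by intro c w; ext x; simp }
    have hr : LinearMap.range r = ⊤ := by
      have hco : (LinearMap.range r).dualCoannihilator = ⊥ := by
        rw [Submodule.eq_bot_iff]
        intro x hx
        have hx' := (Submodule.mem_dualCoannihilator x).mp hx
        have : (x : U) = 0 := by
          refine hB1 _ fun w => ?_
          have := hx' (r w) ⟨w, rfl⟩
          simpa [r] using this
        exact Subtype.ext this
      apply Submodule.eq_top_of_finrank_eq
      have h1 := Subspace.finrank_add_finrank_dualCoannihilator_eq (LinearMap.range r)
      rw [hco, finrank_bot, add_zero] at h1
      rw [h1, Subspace.dual_finrank_eq]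
    have hex : ∀ i, ∃ w : W, r w = v.coord i := by
      intro i
      have : v.coord i ∈ LinearMap.range r := hr ▸ Submodule.mem_top
      exact this
    choose w' hw' using hex
    have hex2 : ∀ i, ∃ w'' : W, B.flip w'' = φ.dualMap (B.flip (w' i)) := by
      intro i
      exact hdual (B.flip (w' i)) ⟨w' i, rfl⟩
    choose w'' hw'' using hex2
    refine ⟨∑ i, (v i : U) ⊗ₜ[ℂ] w'' i, ?_⟩
    ext x
    rw [map_sum]
    have hx : ∀ i, B x (w'' i) = v.coord i ⟨φ x, LinearMap.mem_range_self φ x⟩ := by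
      intro i
      have h1 : B.flip (w'' i) x = φ.dualMap (B.flip (w' i)) x := by rw [hw'']
      have h2 : φ.dualMap (B.flip (w' i)) x = B (φ x) (w' i) := rfl
      have h3 : B (φ x) (w' i) = r (w' i) ⟨φ x, LinearMap.mem_range_self φ x⟩ := rfl
      calc B x (w'' i) = B.flip (w'' i) x := rfl
        _ = v.coord i ⟨φ x, LinearMap.mem_range_self φ x⟩ := by
            rw [h1, h2, h3, hw']
    calc (∑ i, iotaMap B ((v i : U) ⊗ₜ[ℂ] w'' i)) x
        = ∑ i, B x (w'' i) • (v i : U) := by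
          rw [LinearMap.sum_apply]
          exact Finset.sum_congr rfl fun i _ => iotaMap_apply B _ x _
      _ = ((∑ i, v.coord i ⟨φ x, LinearMap.mem_range_self φ x⟩ • (v i) : V) : U) := by
          rw [Submodule.coe_sum]
          exact Finset.sum_congr rfl fun i _ => by rw [hx i]; rfl
      _ = φ x := by
          have hy : (∑ i, v.coord i ⟨φ x, LinearMap.mem_range_self φ x⟩ • v i)
              = (⟨φ x, LinearMap.mem_range_self φ x⟩ : V) := by
            simp only [Module.Basis.coord_apply]
            exact v.sum_repr _
          rw [hy]
  · -- S is a Lie ideal of the Mackey algebra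
    intro φ hφ ψ hψ
    obtain ⟨hψfin, hψdual⟩ := hψ
    haveI := hψfin
    constructor
    · have h1 : FiniteDimensional ℂ (LinearMap.range (φ * ψ)) := by
        have : LinearMap.range (φ * ψ) = Submodule.map φ (LinearMap.range ψ) :=
          LinearMap.range_comp ψ φ
        rw [this]
        infer_instance
      have h2 : FiniteDimensional ℂ (LinearMap.range (ψ * φ)) := by
        have : LinearMap.range (ψ * φ) ≤ LinearMap.range ψ := by
          rintro _ ⟨x, rfl⟩
          exact LinearMap.mem_range_self ψ (φ x)
        exact Submodule.finiteDimensional_of_le this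
      have hle : LinearMap.range (φ * ψ - ψ * φ) ≤
          LinearMap.range (φ * ψ) ⊔ LinearMap.range (ψ * φ) := by
        rintro _ ⟨x, rfl⟩
        exact Submodule.sub_mem _ (Submodule.mem_sup_left ⟨x, rfl⟩)
          (Submodule.mem_sup_right ⟨x, rfl⟩)
      exact Submodule.finiteDimensional_of_le hle
    · intro ξ hξ
      have h : (φ * ψ - ψ * φ).dualMap ξ
          = ψ.dualMap (φ.dualMap ξ) - φ.dualMap (ψ.dualMap ξ) := by
        ext x; simp
      rw [h]
      exact Submodule.sub_mem _ (hψdual _ (hφ ξ hξ)) (hφ _ (hψdual ξ hξ))
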